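/- Let A be the 5×5 centrosymmetric tridiagonal matrix with diagonal (a,-a,a,-a,a) (a real), superdiagonal (b₁,b₂,b₃,b₄), subdiagonal (b₄,b₃,b₂,b₁), and J = diag(1,-1,1,-1,1). Then the eigenvalues of A are a, ±√(a² + b₁b₄) and ±√(a² + b₁b₄ + 2b₂b₃); equivalently, det(A - λI₅) = -(λ - a)(λ² - Δ₁)(λ² - Δ₂) with Δ₁ = a² + b₁b₄ and Δ₂ = Δ₁ + 2b₂b₃. -/

import Mathlib

open Matrix Complex

set_option maxHeartbeats 1000000 in
theorem stmt9 (a : ℝ) (b₁ b₂ b₃ b₄ : ℂ)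
    (A : Matrix (Fin 5) (Fin 5) ℂ)
    (hA : A = !![(a : ℂ), b₁, 0, 0, 0;
                 b₄, -(a : ℂ), b₂, 0, 0;
                 0, b₃, (a : ℂ), b₃, 0;
                 0, 0, b₂, -(a : ℂ), b₄;
                 0, 0, 0, b₁, (a : ℂ)])
    (Δ₁ Δ₂ : ℂ)
    (hΔ₁ : Δ₁ = (a : ℂ)^2 + b₁ * b₄)
    (hΔ₂ : Δ₂ = Δ₁ + 2 * b₂ * b₃) :
    ∀ lam : ℂ, (A - lam • (1 : Matrix (Fin 5) (Fin 5) ℂ)).det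
      = -((lam - a) * (lam^2 - Δ₁) * (lam^2 - Δ₂)) := by
  intro lam
  subst hA hΔ₂ hΔ₁
  have h : (!![(a : ℂ), b₁, 0, 0, 0;
                 b₄, -(a : ℂ), b₂, 0, 0;
                 0, b₃, (a : ℂ), b₃, 0;
                 0, 0, b₂, -(a : ℂ), b₄;
                 0, 0, 0, b₁, (a : ℂ)] - lam • (1 : Matrix (Fin 5) (Fin 5) ℂ))
      = !![(a : ℂ) - lam, b₁, 0, 0, 0;
           b₄, -(a : ℂ) - lam, b₂, 0, 0;
           0, b₃, (a : ℂ) - lam, b₃, 0;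
           0, 0, b₂, -(a : ℂ) - lam, b₄;
           0, 0, 0, b₁, (a : ℂ) - lam] := by
    ext i j
    fin_cases i <;> fin_cases j <;>
      simp [Matrix.one_apply]
  rw [h]
  simp [Matrix.det_succ_row_zero, Fin.sum_univ_succ, Fin.succAbove]
  ring
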